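/- If a vertex y added to a graph H is not simplicial in H' = H + y, then H' has strictly more maximal induced stars than H: |S(H')| ≥ |S(H)| + 1. -/

import Mathlib

open SimpleGraph

/-- An induced star of `H` with center `v` and leaf set `L`: `L` is a nonempty
independent set of neighbors of `v`. -/
def IsStar {V : Type*} (H : SimpleGraph V) (v : V) (L : Set V) : Prop :=
  L.Nonempty ∧ (∀ u ∈ L, H.Adj v u) ∧ ∀ u ∈ L, ∀ w ∈ L, ¬ H.Adj u w

/-- `S` is the vertex set of an induced star of `H`. -/
def IsStarSet {V : Type*} (H : SimpleGraph V) (S : Set V) : Prop :=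
  ∃ v L, IsStar H v L ∧ S = insert v L

/-- `S` is the vertex set of a maximal induced star of `H`. -/
def IsMaxStarSet {V : Type*} (H : SimpleGraph V) (S : Set V) : Prop :=
  IsStarSet H S ∧ ∀ T, IsStarSet H T → S ⊆ T → S = T

/-- The set of (vertex sets of) maximal induced stars of `H`. -/
def maxStars {V : Type*} (H : SimpleGraph V) : Set (Set V) := {S | IsMaxStarSet H S}

/-- The star graph of `H`: the intersection graph of the maximal induced stars of `H`. -/
def starGraph {V : Type*} (H : SimpleGraph V) : SimpleGraph ↥(maxStars H) :=
  SimpleGraph.fromRel fun S T => ((S : Set V) ∩ (T : Set V)).Nonempty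
section Aux

variable {V' : Type*} {H' : SimpleGraph V'} {y : V'}

lemma aux_not_mem_image (S : Set ({y}ᶜ : Set V')) : y ∉ Subtype.val '' S := by
  rintro ⟨u, _, huy⟩
  exact u.2 huy

/-- Transfer a star set of the induced graph up to `H'`. -/
lemma aux_image_star {S : Set ({y}ᶜ : Set V')}
    (h : IsStarSet (H'.induce ({y}ᶜ : Set V')) S) :
    IsStarSet H' (Subtype.val '' S) := by
  obtain ⟨v, L, ⟨hne, hadj, hind⟩, rfl⟩ := h
  refine ⟨v, Subtype.val '' L, ⟨hne.image _, ?_, ?_⟩, by rw [Set.image_insert_eq]⟩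
  · rintro _ ⟨u, hu, rfl⟩; exact hadj u hu
  · rintro _ ⟨u, hu, rfl⟩ _ ⟨w, hw, rfl⟩; exact hind u hu w hw

/-- Transfer a star set of `H'` avoiding `y` down to the induced graph. -/
lemma aux_preimage_star {T : Set V'} (h : IsStarSet H' T) (hy : y ∉ T) :
    ∃ S : Set ({y}ᶜ : Set V'),
      IsStarSet (H'.induce ({y}ᶜ : Set V')) S ∧ Subtype.val '' S = T := by
  obtain ⟨v, L, ⟨hne, hadj, hind⟩, rfl⟩ := h
  have hv : v ∈ ({y}ᶜ : Set V') := by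
    intro h
    rw [Set.mem_singleton_iff] at h
    subst h
    exact hy (Set.mem_insert _ _)
  have hL : ∀ u ∈ L, u ∈ ({y}ᶜ : Set V') := by
    intro u hu h
    rw [Set.mem_singleton_iff] at h
    subst h
    exact hy (Set.mem_insert_of_mem _ hu)
  refine ⟨Subtype.val ⁻¹' (insert v L), ⟨⟨v, hv⟩, Subtype.val ⁻¹' L, ⟨?_, ?_, ?_⟩, ?_⟩, ?_⟩
  · obtain ⟨u, hu⟩ := hne
    exact ⟨⟨u, hL u hu⟩, hu⟩
  · exact fun u hu => hadj u.1 hu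
  · exact fun u hu w hw => hind u.1 hu w.1 hw
  · ext u
    simp [Set.mem_insert_iff, Subtype.ext_iff]
  · rw [Subtype.image_preimage_coe]
    refine Set.inter_eq_right.mpr ?_
    rintro u hu hu'
    rw [Set.mem_singleton_iff.mp hu'] at hu
    exact hy hu

/-- Key dichotomy: a star set of `H'` containing (the image of) a maximal star set `S`
of the induced graph is `S` or `S ∪ {y}`. -/
lemma aux_dichotomy {S : Set ({y}ᶜ : Set V')}
    (hS : IsMaxStarSet (H'.induce ({y}ᶜ : Set V')) S)
    {T : Set V'} (hT : IsStarSet H' T) (hsub : Subtype.val '' S ⊆ T) :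
    T = Subtype.val '' S ∨ T = insert y (Subtype.val '' S) := by
  classical
  -- get an adjacent pair inside the image of S
  obtain ⟨c, M, ⟨⟨m, hm⟩, hcadj, _⟩, hSeq⟩ := hS.1
  have hadjcm : H'.Adj c.1 m.1 := hcadj m hm
  have hcS : (c : V') ∈ Subtype.val '' S := ⟨c, hSeq ▸ Set.mem_insert _ _, rfl⟩
  have hmS : (m : V') ∈ Subtype.val '' S := ⟨m, hSeq ▸ Set.mem_insert_of_mem _ hm, rfl⟩
  obtain ⟨v, L, ⟨hne, hadj, hind⟩, rfl⟩ := hT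
  -- v ≠ y
  have hvy : v ≠ y := by
    rintro rfl
    have hc' : (c : V') ∈ L := (hsub hcS).resolve_left c.2
    have hm' : (m : V') ∈ L := (hsub hmS).resolve_left m.2
    exact hind _ hc' _ hm' hadjcm
  -- the star set with y removed
  have hcm : (c : V') ≠ (m : V') := hadjcm.ne
  have hLne : (L \ {y} : Set V').Nonempty := by
    rcases (hsub hcS) with hc' | hc'
    · refine ⟨m, (hsub hmS).resolve_left ?_, m.2⟩
      rw [← hc']; exact fun h => hcm h.symm
    · exact ⟨c, hc', c.2⟩
  have hA : IsStarSet H' (insert v (L \ {y})) :=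
    ⟨v, L \ {y}, ⟨hLne, fun u hu => hadj u hu.1,
      fun u hu w hw => hind u hu.1 w hw.1⟩, rfl⟩
  have hyA : y ∉ insert v (L \ {y}) := by
    rintro (rfl | h)
    · exact hvy rfl
    · exact h.2 rfl
  have hAeq : insert v (L \ {y}) = insert v L \ {y} := by
    rw [Set.insert_diff_of_notMem _ (by simpa using hvy)]
  have hsub' : Subtype.val '' S ⊆ insert v (L \ {y}) := by
    intro u hu
    rw [hAeq]
    exact ⟨hsub hu, by rintro rfl; exact aux_not_mem_image S hu⟩
  obtain ⟨S', hS', hS'eq⟩ := aux_preimage_star hA hyA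
  have hSS' : S ⊆ S' := by
    have := hsub'
    rw [← hS'eq] at this
    exact (Set.image_subset_image_iff Subtype.val_injective).mp this
  have : S = S' := hS.2 S' hS' hSS'
  have hAS : insert v (L \ {y}) = Subtype.val '' S := by rw [this, hS'eq]
  by_cases hyT : y ∈ insert v L
  · right
    rw [← hAS, hAeq, Set.insert_diff_singleton, Set.insert_eq_of_mem hyT]
  · left
    rw [← hAS, hAeq, Set.diff_singleton_eq_self hyT]

end Aux


/-- If the added vertex `y` is not simplicial in `H'`, then `H' = (H' - y) + y` has
strictly more maximal induced stars than `H' - y`. -/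
theorem stmt14 {V' : Type*} [Fintype V'] (H' : SimpleGraph V') (y : V')
    (hns : ¬ H'.IsClique (H'.neighborSet y)) :
    (maxStars (H'.induce ({y}ᶜ : Set V'))).ncard + 1 ≤ (maxStars H').ncard := by
  classical
  set H := H'.induce ({y}ᶜ : Set V') with hH
  -- the injection
  set f : Set ({y}ᶜ : Set V') → Set V' := fun S =>
    if IsStarSet H' (insert y (Subtype.val '' S)) then insert y (Subtype.val '' S)
    else Subtype.val '' S with hf
  have hf_diff : ∀ S : Set ({y}ᶜ : Set V'), f S \ {y} = Subtype.val '' S := by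
    intro S
    by_cases h : IsStarSet H' (insert y (Subtype.val '' S))
    · rw [hf]; simp only [if_pos h]
      exact Set.insert_diff_self_of_notMem (aux_not_mem_image S)
    · rw [hf]; simp only [if_neg h]
      exact Set.diff_singleton_eq_self (aux_not_mem_image S)
  have hf_mem : ∀ S ∈ maxStars H, f S ∈ maxStars H' := by
    intro S hS
    by_cases h : IsStarSet H' (insert y (Subtype.val '' S))
    · rw [hf]; simp only [if_pos h]
      refine ⟨h, fun T hT hsub => ?_⟩
      rcases aux_dichotomy hS hT ((Set.subset_insert _ _).trans hsub) with rfl | rfl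
      · exact absurd (hsub (Set.mem_insert _ _)) (aux_not_mem_image S)
      · rfl
    · rw [hf]; simp only [if_neg h]
      refine ⟨aux_image_star hS.1, fun T hT hsub => ?_⟩
      rcases aux_dichotomy hS hT hsub with rfl | rfl
      · rfl
      · exact absurd hT h
  have hf_inj : Set.InjOn f (maxStars H) := by
    intro S₁ _ S₂ _ h
    have : Subtype.val '' S₁ = Subtype.val '' S₂ := by
      rw [← hf_diff S₁, ← hf_diff S₂, h]
    exact Set.image_injective.mpr Subtype.val_injective this
  -- the extra star, centered at y
  rw [SimpleGraph.isClique_iff, Set.Pairwise] at hns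
  push_neg at hns
  obtain ⟨a, ha, b, hb, hab, hnadj⟩ := hns
  rw [SimpleGraph.mem_neighborSet] at ha hb
  set P : Set (Set V') := {L | a ∈ L ∧ b ∈ L ∧ (∀ u ∈ L, H'.Adj y u) ∧
    ∀ u ∈ L, ∀ w ∈ L, ¬ H'.Adj u w} with hP
  have habP : ({a, b} : Set V') ∈ P := by
    refine ⟨Set.mem_insert _ _, Set.mem_insert_of_mem _ rfl, ?_, ?_⟩
    · rintro u (rfl | rfl); exacts [ha, hb]
    · rintro u (rfl | rfl) w (rfl | rfl)
      exacts [H'.irrefl, hnadj, fun h => hnadj h.symm, H'.irrefl]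
  obtain ⟨L₀, hL₀, hL₀max⟩ := Set.Finite.exists_maximalFor id P (Set.toFinite P) ⟨_, habP⟩
  obtain ⟨haL, hbL, hLadj, hLind⟩ := hL₀
  have hyL : y ∉ L₀ := fun h => H'.irrefl (hLadj y h)
  set T₀ : Set V' := insert y L₀ with hT₀
  have hT₀star : IsStarSet H' T₀ := ⟨y, L₀, ⟨⟨a, haL⟩, hLadj, hLind⟩, rfl⟩
  have hT₀mem : T₀ ∈ maxStars H' := by
    refine ⟨hT₀star, fun T hT hsub => ?_⟩
    obtain ⟨v, L, ⟨hne, hadj, hind⟩, rfl⟩ := hT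
    by_cases hv : v = y
    · subst hv
      have hLL : L₀ ⊆ L := fun u hu =>
        ((hsub (Set.mem_insert_of_mem _ hu)).resolve_left (fun h => hyL (h ▸ hu)))
      have hLP : L ∈ P := ⟨hLL haL, hLL hbL, hadj, hind⟩
      have hEq : L₀ = L := le_antisymm hLL (hL₀max hLP hLL)
      rw [hT₀, hEq]
    · exfalso
      have hyL' : y ∈ L := (hsub (Set.mem_insert _ _)).resolve_left (Ne.symm hv)
      have haL' : a ∈ L := by
        rcases hsub (Set.mem_insert_of_mem _ haL) with rfl | h
        · have hbL' : b ∈ L :=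
            (hsub (Set.mem_insert_of_mem _ hbL)).resolve_left (fun h => hab h.symm)
          exact absurd (hadj b hbL') hnadj
        · exact h
      exact hind y hyL' a haL' ha
  have hT₀notim : T₀ ∉ f '' (maxStars H) := by
    rintro ⟨S, hS, hfS⟩
    have h1 : Subtype.val '' S = L₀ := by
      rw [← hf_diff S, hfS, hT₀, Set.insert_diff_self_of_notMem hyL]
    have h2 : y ∈ f S := by rw [hfS]; exact Set.mem_insert _ _
    by_cases h : IsStarSet H' (insert y (Subtype.val '' S))
    · -- image of S is a star set of H', so contains an edge, contradicting independence of L₀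
      obtain ⟨c, M, ⟨⟨m, hm⟩, hcadj, _⟩, hSeq⟩ := aux_image_star hS.1
      have hcL : c ∈ L₀ := h1 ▸ hSeq ▸ Set.mem_insert _ _
      have hmL : m ∈ L₀ := h1 ▸ hSeq ▸ Set.mem_insert_of_mem _ hm
      exact hLind c hcL m hmL (hcadj m hm)
    · rw [hf] at h2; simp only [if_neg h] at h2
      exact aux_not_mem_image S h2
  -- counting
  have hfin : (maxStars H').Finite := Set.toFinite _
  have hsub : insert T₀ (f '' (maxStars H)) ⊆ maxStars H' := by
    rintro T (rfl | ⟨S, hS, rfl⟩)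
    · exact hT₀mem
    · exact hf_mem S hS
  calc (maxStars H).ncard + 1 = (f '' (maxStars H)).ncard + 1 := by
        rw [Set.ncard_image_of_injOn hf_inj]
    _ = (insert T₀ (f '' (maxStars H))).ncard := by
        rw [Set.ncard_insert_of_notMem hT₀notim (Set.toFinite _)]
    _ ≤ (maxStars H').ncard := Set.ncard_le_ncard hsub hfin
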